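/- Let Ψ : [0,∞) → ℝ be a Lévy–Khintchine function of spectrally positive type that is positive somewhere (non-subordinator case), i.e. Ψ(x) > 0 for some x > 0, and let Σ be a nonzero Lévy–Khintchine collision mechanism. Then S_V(x₀,∞) := ∫_{x₀}^∞ (1/Σ(x)) exp(−∫_{x₀}^x Ψ(u)/Σ(u) du) dx < ∞ for x₀ large enough (equivalently for any x₀ > 0, up to a multiplicative constant). -/

import Mathlib

open Set MeasureTheory
open scoped ENNReal

lemma stmt19_aux_nonneg (x h : ℝ) : 0 ≤ Real.exp (-x*h) - 1 + x*h := by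
  rw [neg_mul]
  nlinarith [Real.add_one_le_exp (-(x*h))]

lemma stmt19_aux_pos {x h : ℝ} (hs : 0 < x*h) : 0 < Real.exp (-x*h) - 1 + x*h := by
  rw [neg_mul]
  nlinarith [Real.add_one_lt_exp (show -(x*h) ≠ 0 by linarith)]

lemma stmt19_aux_le_self {x h : ℝ} (hs : 0 ≤ x*h) : Real.exp (-x*h) - 1 + x*h ≤ x*h := by
  have : Real.exp (-x*h) ≤ 1 := Real.exp_le_one_iff.mpr (by linarith)
  linarith

lemma stmt19_aux_le_sq {x h : ℝ} (hs : 0 ≤ x*h) : Real.exp (-x*h) - 1 + x*h ≤ (x*h)^2 := by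
  set s : ℝ := x*h with hsdef
  have hrw : -x*h = -s := by rw [hsdef]; ring
  rw [hrw]
  have h1 := Real.add_one_le_exp s
  have h2 : Real.exp (-s) * Real.exp s = 1 := by rw [← Real.exp_add]; simp
  have h4 := Real.exp_pos (-s)
  nlinarith [mul_nonneg (mul_nonneg hs hs) hs, mul_nonneg hs hs,
    mul_le_mul_of_nonneg_left h1 h4.le]

lemma stmt19_aux_integrable_of_lintegral {μ : Measure ℝ} {f : ℝ → ℝ}
    (hf : Continuous f) (hnn : ∀ x ∈ Ioi (0:ℝ), 0 ≤ f x)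
    (hfin : ∫⁻ h in Ioi (0:ℝ), ENNReal.ofReal (f h) ∂μ < ⊤) :
    IntegrableOn f (Ioi 0) μ := by
  refine ⟨hf.aestronglyMeasurable, ?_⟩
  rw [hasFiniteIntegral_iff_ofReal]
  · exact hfin
  · exact (ae_restrict_iff' measurableSet_Ioi).2 (ae_of_all _ hnn)

lemma stmt19_aux_slope (f : ℝ → ℝ) (hconv : ConvexOn ℝ (Ici 0) f) (hf0 : f 0 = 0)
    (x₁ : ℝ) (hx₁ : x₁ > 0) (x : ℝ) (hx : x ≥ x₁) : (f x₁ / x₁) * x ≤ f x := by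
  have hxpos : 0 < x := lt_of_lt_of_le hx₁ hx
  have htmem : x₁ / x ∈ Icc (0:ℝ) 1 := by
    constructor
    · positivity
    · rw [div_le_one hxpos]; exact hx
  have := hconv.2 self_mem_Ici (mem_Ici.mpr hxpos.le)
    (by linarith [htmem.2] : (0:ℝ) ≤ 1 - x₁/x) htmem.1 (by ring)
  simp only [smul_eq_mul, mul_zero, zero_add, hf0] at this
  have harg : x₁ / x * x = x₁ := by field_simp
  rw [harg] at this
  rw [div_mul_eq_mul_div, div_le_iff₀ hx₁]
  have h4 : (x₁ / x * f x) * x = f x * x₁ := by field_simp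
  linarith [mul_le_mul_of_nonneg_right this hxpos.le, h4]


set_option maxHeartbeats 2000000 in
/-- In the non-subordinator case (`Ψ(x) > 0` for some `x > 0`), with `Σ` a nonzero
Lévy–Khintchine collision mechanism, the scale measure tail
`S_V(x₀,∞) = ∫_{x₀}^∞ (1/Σ(x)) exp(−∫_{x₀}^x Ψ/Σ) dx` is finite for every `x₀ > 0`. -/
theorem stmt19 (σ b a c : ℝ) (hσ : 0 ≤ σ) (ha : 0 ≤ a) (hc : 0 ≤ c)
    (π η : Measure ℝ)
    (hπ : ∫⁻ h in Ioi (0:ℝ), ENNReal.ofReal (min 1 (h^2)) ∂π < ⊤)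
    (hη : ∫⁻ h in Ioi (0:ℝ), ENNReal.ofReal (min h (h^2)) ∂η < ⊤)
    (Psi Sig : ℝ → ℝ)
    (hPsi : ∀ x, Psi x = σ^2/2 * x^2 - b*x +
      ∫ h in Ioi (0:ℝ), (Real.exp (-x*h) - 1 + x*h * (if h ≤ 1 then 1 else 0)) ∂π)
    (hSig : ∀ x, Sig x = a^2/2 * x^2 + c/2 * x +
      ∫ h in Ioi (0:ℝ), (Real.exp (-x*h) - 1 + x*h) ∂η)
    (hSne : ∃ x > (0:ℝ), Sig x ≠ 0)
    (hPpos : ∃ x > (0:ℝ), 0 < Psi x) :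
    ∀ x₀ > (0:ℝ),
      IntegrableOn
        (fun x => (1 / Sig x) * Real.exp (-(∫ u in x₀..x, Psi u / Sig u)))
        (Ioi x₀) := by
  -- integrable dominating functions
  have hminη : IntegrableOn (fun h => min h (h^2)) (Ioi 0) η := by
    refine stmt19_aux_integrable_of_lintegral (continuous_id.min (continuous_pow 2))
      (fun x hx => le_min hx.le (by positivity)) hη
  have hminπ : IntegrableOn (fun h : ℝ => min 1 (h^2)) (Ioi 0) π := by
    refine stmt19_aux_integrable_of_lintegral (continuous_const.min (continuous_pow 2))
      (fun x hx => le_min one_pos.le (by positivity)) hπ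
  -- integrability of the Sig integrand
  have hgInt : ∀ x : ℝ, 0 ≤ x →
      IntegrableOn (fun h => Real.exp (-x*h) - 1 + x*h) (Ioi 0) η := by
    intro x hx
    refine Integrable.mono' (hminη.const_mul (max x (x^2)))
      (Continuous.aestronglyMeasurable (by fun_prop)) ?_
    refine (ae_restrict_iff' measurableSet_Ioi).2 (ae_of_all _ fun h hh => ?_)
    rw [Real.norm_of_nonneg (stmt19_aux_nonneg x h)]
    rcases le_or_gt h 1 with h1 | h1
    · have hm : min h (h^2) = h^2 := min_eq_right (by nlinarith [(mem_Ioi.mp hh).le])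
      rw [hm]
      calc Real.exp (-x*h) - 1 + x*h ≤ (x*h)^2 := stmt19_aux_le_sq (mul_nonneg hx hh.le)
        _ = x^2 * h^2 := by ring
        _ ≤ max x (x^2) * h^2 := by nlinarith [le_max_right x (x^2), sq_nonneg h]
    · have hm : min h (h^2) = h := min_eq_left (by nlinarith)
      rw [hm]
      calc Real.exp (-x*h) - 1 + x*h ≤ x*h := stmt19_aux_le_self (mul_nonneg hx hh.le)
        _ ≤ max x (x^2) * h := by nlinarith [le_max_left x (x^2), hh]
  -- integrability of the Psi integrand
  have hpInt : ∀ x : ℝ, 0 ≤ x →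
      IntegrableOn (fun h => Real.exp (-x*h) - 1 + x*h * (if h ≤ 1 then 1 else 0))
        (Ioi 0) π := by
    intro x hx
    have hmeas : Measurable fun h => Real.exp (-x*h) - 1 + x*h * (if h ≤ 1 then 1 else 0) := by
      have h1 : Measurable fun h : ℝ => (if h ≤ 1 then (1:ℝ) else 0) :=
        measurable_const.ite (measurableSet_le measurable_id measurable_const) measurable_const
      fun_prop
    refine Integrable.mono' (hminπ.const_mul (max 1 (x^2))) hmeas.aestronglyMeasurable ?_
    refine (ae_restrict_iff' measurableSet_Ioi).2 (ae_of_all _ fun h hh => ?_)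
    rcases le_or_gt h 1 with h1 | h1
    · simp only [if_pos h1, mul_one]
      rw [Real.norm_of_nonneg (stmt19_aux_nonneg x h)]
      have hm : min 1 (h^2) = h^2 := min_eq_right (by nlinarith [(mem_Ioi.mp hh).le])
      rw [hm]
      calc Real.exp (-x*h) - 1 + x*h ≤ (x*h)^2 := stmt19_aux_le_sq (mul_nonneg hx hh.le)
        _ = x^2 * h^2 := by ring
        _ ≤ max 1 (x^2) * h^2 := by nlinarith [le_max_right 1 (x^2), sq_nonneg h]
    · simp only [if_neg (not_le.mpr h1), mul_zero, add_zero]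
      have he1 : Real.exp (-x*h) ≤ 1 := Real.exp_le_one_iff.mpr (by nlinarith)
      have he0 : 0 < Real.exp (-x*h) := Real.exp_pos _
      have hm : min 1 (h^2) = 1 := min_eq_left (by nlinarith)
      rw [hm, mul_one, Real.norm_eq_abs, abs_le]
      constructor <;> nlinarith [le_max_left 1 (x^2)]
  -- values at 0
  have hSig0 : Sig 0 = 0 := by
    rw [hSig 0]
    have he : (fun h : ℝ => Real.exp (-0*h) - 1 + 0*h) = fun _ => (0:ℝ) := by
      funext h; simp
    rw [he]; simp
  have hPsi0 : Psi 0 = 0 := by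
    rw [hPsi 0]
    have he : (fun h : ℝ => Real.exp (-0*h) - 1 + 0*h * (if h ≤ 1 then 1 else 0))
        = fun _ => (0:ℝ) := by
      funext h; simp
    rw [he]; simp
  -- convexity of Sig
  have hSigConv : ConvexOn ℝ (Ici 0) Sig := by
    refine ⟨convex_Ici 0, fun x hx y hy s t hs ht hst => ?_⟩
    simp only [smul_eq_mul]
    have hxy : (0:ℝ) ≤ s*x + t*y := by
      have := mul_nonneg hs hx; have := mul_nonneg ht hy; linarith
    rw [hSig (s*x + t*y), hSig x, hSig y]
    have hint : (∫ h in Ioi (0:ℝ), (Real.exp (-(s*x+t*y)*h) - 1 + (s*x+t*y)*h) ∂η)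
        ≤ ∫ h in Ioi (0:ℝ), (s * (Real.exp (-x*h) - 1 + x*h) + t * (Real.exp (-y*h) - 1 + y*h)) ∂η := by
      refine integral_mono (hgInt _ hxy) (((hgInt x hx).const_mul s).add ((hgInt y hy).const_mul t)) ?_
      intro h
      dsimp only
      have e := convexOn_exp.2 (mem_univ (-x*h)) (mem_univ (-y*h)) hs ht hst
      simp only [smul_eq_mul] at e
      have harg : -(s*x + t*y)*h = s*(-x*h) + t*(-y*h) := by ring
      rw [harg]
      nlinarith [e]
    rw [integral_add ((hgInt x hx).const_mul s) ((hgInt y hy).const_mul t),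
      integral_const_mul, integral_const_mul] at hint
    have key : a^2/2 * (s*x+t*y)^2 + c/2*(s*x+t*y)
        ≤ s * (a^2/2*x^2 + c/2*x) + t * (a^2/2*y^2 + c/2*y) := by
      have ht' : t = 1 - s := by linarith
      have hq : s * (a^2/2*x^2 + c/2*x) + t * (a^2/2*y^2 + c/2*y)
          - (a^2/2 * (s*x+t*y)^2 + c/2*(s*x+t*y)) = a^2/2*(s*t)*(x-y)^2 := by
        rw [ht']; ring
      nlinarith [mul_nonneg (mul_nonneg (mul_nonneg hs ht) (sq_nonneg (x-y))) (sq_nonneg a)]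
    linarith
  -- convexity of Psi
  have hPsiConv : ConvexOn ℝ (Ici 0) Psi := by
    refine ⟨convex_Ici 0, fun x hx y hy s t hs ht hst => ?_⟩
    simp only [smul_eq_mul]
    have hxy : (0:ℝ) ≤ s*x + t*y := by
      have := mul_nonneg hs hx; have := mul_nonneg ht hy; linarith
    rw [hPsi (s*x + t*y), hPsi x, hPsi y]
    have hint : (∫ h in Ioi (0:ℝ), (Real.exp (-(s*x+t*y)*h) - 1 + (s*x+t*y)*h * (if h ≤ 1 then 1 else 0)) ∂π)
        ≤ ∫ h in Ioi (0:ℝ), (s * (Real.exp (-x*h) - 1 + x*h * (if h ≤ 1 then 1 else 0))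
            + t * (Real.exp (-y*h) - 1 + y*h * (if h ≤ 1 then 1 else 0))) ∂π := by
      refine integral_mono (hpInt _ hxy) (((hpInt x hx).const_mul s).add ((hpInt y hy).const_mul t)) ?_
      intro h
      dsimp only
      have e := convexOn_exp.2 (mem_univ (-x*h)) (mem_univ (-y*h)) hs ht hst
      simp only [smul_eq_mul] at e
      have harg : -(s*x + t*y)*h = s*(-x*h) + t*(-y*h) := by ring
      rw [harg]
      rcases le_or_gt h 1 with h1 | h1
      · simp only [if_pos h1, mul_one]; nlinarith [e]
      · simp only [if_neg (not_le.mpr h1), mul_zero, add_zero]; nlinarith [e]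
    rw [integral_add ((hpInt x hx).const_mul s) ((hpInt y hy).const_mul t),
      integral_const_mul, integral_const_mul] at hint
    have key : σ^2/2 * (s*x+t*y)^2 - b*(s*x+t*y)
        ≤ s * (σ^2/2*x^2 - b*x) + t * (σ^2/2*y^2 - b*y) := by
      have ht' : t = 1 - s := by linarith
      have hq : s * (σ^2/2*x^2 - b*x) + t * (σ^2/2*y^2 - b*y)
          - (σ^2/2 * (s*x+t*y)^2 - b*(s*x+t*y)) = σ^2/2*(s*t)*(x-y)^2 := by
        rw [ht']; ring
      nlinarith [mul_nonneg (mul_nonneg (mul_nonneg hs ht) (sq_nonneg (x-y))) (sq_nonneg σ)]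
    linarith
  -- positivity of Sig on (0, ∞)
  have hSigpos : ∀ x : ℝ, 0 < x → 0 < Sig x := by
    intro x hx
    by_contra hcon
    push_neg at hcon
    have t3nn : 0 ≤ ∫ h in Ioi (0:ℝ), (Real.exp (-x*h) - 1 + x*h) ∂η :=
      setIntegral_nonneg measurableSet_Ioi fun h _ => stmt19_aux_nonneg x h
    have t1nn : 0 ≤ a^2/2 * x^2 := by positivity
    have t2nn : 0 ≤ c/2 * x := by positivity
    have hS := hSig x
    have t1z : a^2/2 * x^2 = 0 := by nlinarith [hS]
    have t2z : c/2 * x = 0 := by nlinarith [hS]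
    have t3z : ∫ h in Ioi (0:ℝ), (Real.exp (-x*h) - 1 + x*h) ∂η = 0 := by
      nlinarith [hS]
    have ha0 : a = 0 := by
      have hx2 : 0 < x^2 := by positivity
      have : a^2 = 0 := by nlinarith
      exact sq_eq_zero_iff.mp this
    have hc0 : c = 0 := by nlinarith
    have hae : (fun h => Real.exp (-x*h) - 1 + x*h) =ᵐ[η.restrict (Ioi 0)] 0 :=
      (integral_eq_zero_iff_of_nonneg (fun h => stmt19_aux_nonneg x h) (hgInt x hx.le)).mp t3z
    have hzero : η.restrict (Ioi 0) = 0 := by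
      have h1 := hae
      rw [Filter.EventuallyEq, ae_restrict_iff' measurableSet_Ioi] at h1
      have h2 : ∀ᵐ h ∂η, h ∉ Ioi (0:ℝ) := by
        refine h1.mono fun h hh hmem => ?_
        exact absurd (hh hmem) (ne_of_gt (stmt19_aux_pos (mul_pos hx (mem_Ioi.mp hmem))))
      exact Measure.restrict_eq_zero.mpr (measure_eq_zero_iff_ae_notMem.mpr h2)
    obtain ⟨x₂, hx₂, hS2⟩ := hSne
    apply hS2
    rw [hSig x₂, ha0, hc0, hzero]
    simp
  -- quadratic upper bound for Sig
  set C : ℝ := a^2/2 + c/2 + (∫ h in Ioi (0:ℝ), min h (h^2) ∂η) + 1 with hCdef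
  have hMnn : 0 ≤ ∫ h in Ioi (0:ℝ), min h (h^2) ∂η :=
    setIntegral_nonneg measurableSet_Ioi fun h hh => le_min (mem_Ioi.mp hh).le (by positivity)
  have hC : 0 < C := by rw [hCdef]; nlinarith [sq_nonneg a]
  have hQ : ∀ x : ℝ, 1 ≤ x → Sig x ≤ C * x^2 := by
    intro x hx
    have hx0 : (0:ℝ) ≤ x := by linarith
    have hint : (∫ h in Ioi (0:ℝ), (Real.exp (-x*h) - 1 + x*h) ∂η)
        ≤ ∫ h in Ioi (0:ℝ), x^2 * min h (h^2) ∂η := by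
      refine setIntegral_mono_on (hgInt x hx0) (hminη.const_mul (x^2)) measurableSet_Ioi ?_
      intro h hh
      rcases le_or_gt h 1 with h1 | h1
      · have hm : min h (h^2) = h^2 := min_eq_right (by nlinarith [mem_Ioi.mp hh])
        rw [hm]
        calc Real.exp (-x*h) - 1 + x*h ≤ (x*h)^2 :=
              stmt19_aux_le_sq (mul_nonneg hx0 (mem_Ioi.mp hh).le)
          _ = x^2 * h^2 := by ring
      · have hm : min h (h^2) = h := min_eq_left (by nlinarith)
        rw [hm]
        calc Real.exp (-x*h) - 1 + x*h ≤ x*h :=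
              stmt19_aux_le_self (mul_nonneg hx0 (mem_Ioi.mp hh).le)
          _ ≤ x^2 * h := by
              nlinarith [mul_nonneg (mul_nonneg (sub_nonneg.mpr hx) hx0) (mem_Ioi.mp hh).le]
    rw [integral_const_mul] at hint
    rw [hSig x, hCdef]
    nlinarith [sq_nonneg x, hint, mul_nonneg hc (mul_nonneg hx0 (sub_nonneg.mpr hx))]
  -- continuity from convexity
  have hSigCont : ContinuousOn Sig (Ioi 0) :=
    (hSigConv.subset Ioi_subset_Ici_self (convex_Ioi 0)).continuousOn isOpen_Ioi
  have hPsiCont : ContinuousOn Psi (Ioi 0) :=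
    (hPsiConv.subset Ioi_subset_Ici_self (convex_Ioi 0)).continuousOn isOpen_Ioi
  have hRat : ContinuousOn (fun u => Psi u / Sig u) (Ioi 0) :=
    hPsiCont.div hSigCont (fun u hu => ne_of_gt (hSigpos u hu))
  obtain ⟨x₁, hx₁, hP1⟩ := hPpos
  intro x₀ hx₀
  -- interval integrability of Psi/Sig on positive intervals
  have hII : ∀ y z : ℝ, 0 < y → y ≤ z →
      IntervalIntegrable (fun u => Psi u / Sig u) volume y z := by
    intro y z hy hyz
    apply ContinuousOn.intervalIntegrable
    apply hRat.mono
    rw [uIcc_of_le hyz]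
    exact fun u hu => lt_of_lt_of_le hy hu.1
  set X : ℝ := max (max x₀ x₁) 1 + 1 with hXdef
  have hXx₀ : x₀ < X := by
    simp only [hXdef]; nlinarith [le_max_left (max x₀ x₁) 1, le_max_left x₀ x₁]
  have hXx₁ : x₁ ≤ X := by
    nlinarith [le_max_left (max x₀ x₁) 1, le_max_right x₀ x₁]
  have hX1 : 1 ≤ X := by nlinarith [le_max_right (max x₀ x₁) 1]
  have hXpos : (0:ℝ) < X := by linarith
  set κ : ℝ := Psi x₁ / x₁ with hκdef
  have hκ : 0 < κ := div_pos hP1 hx₁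
  set r : ℝ := κ / C with hrdef
  have hr : 0 < r := div_pos hκ hC
  -- lower bound for the ratio
  have hratio : ∀ u : ℝ, X ≤ u → r / u ≤ Psi u / Sig u := by
    intro u hu
    have hu0 : 0 < u := lt_of_lt_of_le hXpos hu
    have hSu : 0 < Sig u := hSigpos u hu0
    have hPu : κ * u ≤ Psi u := stmt19_aux_slope Psi hPsiConv hPsi0 x₁ hx₁ u (le_trans hXx₁ hu)
    have hSq : Sig u ≤ C * u^2 := hQ u (le_trans hX1 hu)
    rw [div_le_div_iff₀ hu0 hSu]
    have h1 : r * Sig u ≤ r * (C * u^2) := mul_le_mul_of_nonneg_left hSq hr.le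
    have h2 : r * (C * u^2) = (κ * u) * u := by
      rw [hrdef]; field_simp
    have h4 : (κ*u)*u ≤ Psi u * u := mul_le_mul_of_nonneg_right hPu hu0.le
    linarith
  -- continuity of the primitive
  have hFcont : ContinuousOn (fun x => ∫ u in x₀..x, Psi u / Sig u) (Ici x₀) := by
    intro y hy
    have hy1 : x₀ ≤ y + 1 := le_trans hy (by linarith)
    have hIcc : IntegrableOn (fun u => Psi u / Sig u) (uIcc x₀ (y+1)) volume := by
      rw [uIcc_of_le hy1]
      exact ContinuousOn.integrableOn_Icc (hRat.mono (fun u hu => lt_of_lt_of_le hx₀ hu.1))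
    have hcont := intervalIntegral.continuousOn_primitive_interval hIcc
    have hymem : y ∈ uIcc x₀ (y+1) := by
      rw [uIcc_of_le hy1]; exact ⟨hy, by linarith⟩
    refine (hcont y hymem).mono_of_mem_nhdsWithin ?_
    rw [uIcc_of_le hy1]
    refine mem_nhdsWithin.mpr ⟨Iio (y+1), isOpen_Iio, by simp, ?_⟩
    exact fun z hz => ⟨hz.2, hz.1.le⟩
  have hsub : Ici x₀ ⊆ Ioi 0 := fun z hz => lt_of_lt_of_le hx₀ hz
  have hIntCont : ContinuousOn
      (fun x => (1 / Sig x) * Real.exp (-(∫ u in x₀..x, Psi u / Sig u))) (Ici x₀) := by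
    refine ContinuousOn.mul ?_ ?_
    · exact continuousOn_const.div (hSigCont.mono hsub)
        (fun x hx => ne_of_gt (hSigpos x (hsub hx)))
    · exact Real.continuous_exp.comp_continuousOn hFcont.neg
  -- integrability on (x₀, X]
  have partA : IntegrableOn
      (fun x => (1 / Sig x) * Real.exp (-(∫ u in x₀..x, Psi u / Sig u))) (Ioc x₀ X) := by
    have h : IntegrableOn
        (fun x => (1 / Sig x) * Real.exp (-(∫ u in x₀..x, Psi u / Sig u))) (Icc x₀ X) volume :=
      ContinuousOn.integrableOn_Icc (hIntCont.mono (Icc_subset_Ici_self (a := X) (b := x₀)))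
    exact h.mono_set Ioc_subset_Icc_self
  -- integrability on (X, ∞)
  set K : ℝ := ∫ u in x₀..X, Psi u / Sig u with hKdef
  set β : ℝ := Sig X / X with hβdef
  have hβ : 0 < β := div_pos (hSigpos X hXpos) hXpos
  set D : ℝ := Real.exp (-K) * X ^ r / β with hDdef
  have hg₀ : IntegrableOn (fun x => D * x ^ (-(1+r))) (Ioi X) := by
    exact ((integrableOn_Ioi_rpow_iff hXpos).2 (by linarith)).const_mul D
  have hbound : ∀ x ∈ Ioi X,
      ‖(1 / Sig x) * Real.exp (-(∫ u in x₀..x, Psi u / Sig u))‖ ≤ D * x ^ (-(1+r)) := by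
    intro x hx
    rw [mem_Ioi] at hx
    have hx0 : 0 < x := lt_of_lt_of_le hXpos hx.le
    have hSx : 0 < Sig x := hSigpos x hx0
    have hSlin : β * x ≤ Sig x := stmt19_aux_slope Sig hSigConv hSig0 X hXpos x hx.le
    have hβx : 0 < β * x := mul_pos hβ hx0
    have hadd : K + (∫ u in X..x, Psi u / Sig u) = ∫ u in x₀..x, Psi u / Sig u :=
      intervalIntegral.integral_add_adjacent_intervals
        (hII x₀ X hx₀ hXx₀.le) (hII X x hXpos hx.le)
    have hrec : IntervalIntegrable (fun u => r / u) volume X x := by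
      apply ContinuousOn.intervalIntegrable
      rw [uIcc_of_le hx.le]
      exact continuousOn_const.div continuousOn_id
        (fun u hu => ne_of_gt (lt_of_lt_of_le hXpos hu.1))
    have h0uIcc : (0:ℝ) ∉ uIcc X x := by
      rw [uIcc_of_le hx.le]
      exact fun hmem => absurd hmem.1 (not_le.mpr hXpos)
    have hlogint : (∫ u in X..x, r / u) = r * (Real.log x - Real.log X) := by
      have hfe : (fun u : ℝ => r / u) = fun u => r * (1/u) := by funext u; ring
      rw [hfe, intervalIntegral.integral_const_mul, integral_one_div h0uIcc,
        Real.log_div (ne_of_gt hx0) (ne_of_gt hXpos)]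
    have hmono := intervalIntegral.integral_mono_on hx.le hrec (hII X x hXpos hx.le)
      (fun u hu => hratio u hu.1)
    rw [hlogint] at hmono
    have hFx : K + r * (Real.log x - Real.log X) ≤ ∫ u in x₀..x, Psi u / Sig u := by
      rw [← hadd]; linarith
    rw [Real.norm_of_nonneg (mul_nonneg (one_div_nonneg.mpr hSx.le) (Real.exp_nonneg _))]
    have e1 : Real.exp (-(∫ u in x₀..x, Psi u / Sig u))
        ≤ Real.exp (-(K + r * (Real.log x - Real.log X))) :=
      Real.exp_le_exp.mpr (by linarith)
    have e2 : Real.exp (-(K + r * (Real.log x - Real.log X)))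
        = Real.exp (-K) * X ^ r * x ^ (-r) := by
      rw [Real.rpow_def_of_pos hXpos, Real.rpow_def_of_pos hx0, ← Real.exp_add, ← Real.exp_add]
      congr 1; ring
    have h1S : 1 / Sig x ≤ 1 / (β * x) := one_div_le_one_div_of_le hβx hSlin
    have hmul : (1 / Sig x) * Real.exp (-(∫ u in x₀..x, Psi u / Sig u))
        ≤ (1 / (β * x)) * (Real.exp (-K) * X ^ r * x ^ (-r)) := by
      apply mul_le_mul h1S (e1.trans_eq e2) (Real.exp_nonneg _) (one_div_nonneg.mpr hβx.le)
    have heq : (1 / (β * x)) * (Real.exp (-K) * X ^ r * x ^ (-r)) = D * x ^ (-(1+r)) := by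
      rw [show -(1+r) = (-1) + (-r) by ring, Real.rpow_add hx0, Real.rpow_neg_one, hDdef]
      field_simp
      try ring
    linarith [hmul, heq ▸ hmul]
  have partB : IntegrableOn
      (fun x => (1 / Sig x) * Real.exp (-(∫ u in x₀..x, Psi u / Sig u))) (Ioi X) := by
    refine Integrable.mono' hg₀ ?_ ?_
    · exact ((hIntCont.mono (fun z hz => le_of_lt (lt_of_le_of_lt (le_of_lt hXx₀) hz))).aestronglyMeasurable
        measurableSet_Ioi)
    · exact (ae_restrict_iff' measurableSet_Ioi).2 (ae_of_all _ hbound)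
  rw [← Ioc_union_Ioi_eq_Ioi hXx₀.le]
  exact partA.union partB
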